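/- Let z = (z₁, z₂) ∈ ℂ² with z₂ ≠ 0. Then |z₁ + e^{i log|z₂|²}|² < 1 if and only if z₁ ≠ 0, |z₁| < 2, and |π - Im log^{|z₂|}(z₁) + log|z₂|²| < arccos(|z₁|/2). Moreover, when these hold one has |π - Im log^{|z₂|}(z₁) + log|z₂|²| < π/2. -/

import Mathlib

open MeasureTheory

/-- `log^t(z)`: the branch of the logarithm of `z` whose imaginary part lies in
`[log t², log t² + 2π)`. -/
noncomputable def logT (t : ℝ) (z : ℂ) : ℂ :=
  Complex.log z +
    ((2 * Real.pi * (⌈(Real.log (t ^ 2) - (Complex.log z).im) / (2 * Real.pi)⌉ : ℤ) : ℝ) : ℂ) *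
      Complex.I

/-- `ρ̃(z) = |z₁ + e^{i log|z₂|²}|² - 1`. -/
noncomputable def rhoT (z : ℂ × ℂ) : ℝ :=
  ‖z.1 + Complex.exp (Complex.I * (Real.log (‖z.2‖ ^ 2) : ℂ))‖ ^ 2 - 1

lemma abs_add_exp_sq (a : ℂ) (θ : ℝ) :
    ‖a + Complex.exp (Complex.I * (θ : ℂ))‖ ^ 2 =
      ‖a‖ ^ 2 + 2 * (‖a‖ * Real.cos (Complex.arg a - θ)) + 1 := by
  rw [Complex.sq_norm, Complex.normSq_add]
  have h1 : ‖Complex.exp (Complex.I * (θ:ℂ))‖ = 1 := by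
    simp [Complex.norm_exp]
  have h2 : a * (starRingEnd ℂ) (Complex.exp (Complex.I * (θ:ℂ)))
      = (‖a‖ : ℂ) * Complex.exp ((Complex.arg a - θ : ℝ) * Complex.I) := by
    rw [← Complex.exp_conj]
    conv_lhs => rw [← Complex.norm_mul_exp_arg_mul_I a]
    rw [mul_assoc, ← Complex.exp_add]
    congr 1
    simp only [map_mul, Complex.conj_I, Complex.conj_ofReal]
    push_cast
    ring
  rw [← Complex.sq_norm a, ← Complex.sq_norm (Complex.exp _), h1, h2]
  simp [Complex.exp_mul_I, ← Complex.ofReal_sub, Complex.cos_ofReal_re, Complex.sin_ofReal_im]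
  ring

theorem defining_function_interior (z : ℂ × ℂ) (hz : z.2 ≠ 0) :
    (‖z.1 + Complex.exp (Complex.I * (Real.log (‖z.2‖ ^ 2) : ℂ))‖ ^ 2 < 1 ↔
      z.1 ≠ 0 ∧ ‖z.1‖ < 2 ∧
        |Real.pi - (logT (‖z.2‖) z.1).im + Real.log (‖z.2‖ ^ 2)| <
          Real.arccos (‖z.1‖ / 2)) ∧
    (‖z.1 + Complex.exp (Complex.I * (Real.log (‖z.2‖ ^ 2) : ℂ))‖ ^ 2 < 1 →
      |Real.pi - (logT (‖z.2‖) z.1).im + Real.log (‖z.2‖ ^ 2)| <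
        Real.pi / 2) := by
  have pi_pos := Real.pi_pos
  set a := z.1 with ha
  set θ := Real.log (‖z.2‖ ^ 2) with hθ
  set r := ‖a‖ with hr
  set φ := Complex.arg a with hφ
  set k : ℤ := ⌈(θ - φ) / (2 * Real.pi)⌉ with hk
  have hr0 : 0 ≤ r := norm_nonneg a
  -- imaginary part of logT
  have him : (logT (‖z.2‖) z.1).im = φ + 2 * Real.pi * k := by
    simp [logT, Complex.log_im, ← hφ, ← hθ, ← hk, add_comm]
    rfl
  set E : ℝ := Real.pi - (logT (‖z.2‖) z.1).im + θ with hE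
  have hEeq : E = Real.pi - (φ + 2 * Real.pi * k) + θ := by rw [hE, him]
  -- bounds on k
  have h2pi : (0:ℝ) < 2 * Real.pi := by linarith
  have hk1 : θ - φ ≤ 2 * Real.pi * k := by
    have := Int.le_ceil ((θ - φ) / (2 * Real.pi))
    rw [div_le_iff₀ h2pi] at this
    rw [← hk] at this
    linarith
  have hk2 : 2 * Real.pi * k < θ - φ + 2 * Real.pi := by
    calc 2 * Real.pi * k = (k:ℝ) * (2 * Real.pi) := by ring
    _ < ((θ - φ) / (2 * Real.pi) + 1) * (2 * Real.pi) := by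
        exact mul_lt_mul_of_pos_right (Int.ceil_lt_add_one _) h2pi
    _ = θ - φ + 2 * Real.pi := by field_simp
  have hE1 : E ≤ Real.pi := by rw [hEeq]; linarith
  have hE2 : -Real.pi < E := by rw [hEeq]; linarith
  have hEabs : |E| ≤ Real.pi := abs_le.mpr ⟨le_of_lt hE2, hE1⟩
  -- cos E = - cos (φ - θ)
  have hcos : Real.cos E = - Real.cos (φ - θ) := by
    have : E = (Real.pi - (φ - θ)) - k * (2 * Real.pi) := by rw [hEeq]; ring
    rw [this, Real.cos_sub_int_mul_two_pi, Real.cos_pi_sub]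
  -- rewrite the main quantity
  have hmain : ‖a + Complex.exp (Complex.I * (θ : ℂ))‖ ^ 2
      = r ^ 2 - 2 * (r * Real.cos E) + 1 := by
    rw [abs_add_exp_sq, hcos]; ring
  have key : ‖a + Complex.exp (Complex.I * (θ : ℂ))‖ ^ 2 < 1 ↔
      0 < r ∧ r < 2 * Real.cos E := by
    rw [hmain]
    constructor
    · intro h
      have hfac : r * (r - 2 * Real.cos E) < 0 := by nlinarith
      have hrpos : 0 < r := by
        rcases lt_or_eq_of_le hr0 with h' | h'
        · exact h'
        · exfalso; rw [← h'] at hfac; simp at hfac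
      exact ⟨hrpos, by nlinarith⟩
    · rintro ⟨h1, h2⟩; nlinarith
  -- from the condition, |E| < π/2
  have habslt : ∀ (h : 0 < r ∧ r < 2 * Real.cos E), |E| < Real.pi / 2 := by
    rintro ⟨h1, h2⟩
    by_contra hcon
    push_neg at hcon
    have : Real.cos |E| ≤ 0 :=
      Real.cos_nonpos_of_pi_div_two_le_of_le hcon (by linarith)
    rw [Real.cos_abs] at this
    linarith
  constructor
  · rw [key]
    constructor
    · rintro ⟨h1, h2⟩
      have hcosE : r / 2 < Real.cos E := by linarith
      have hcosE_pos : 0 < Real.cos E := lt_of_le_of_lt (by positivity) hcosE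
      have habs : |E| < Real.pi / 2 := habslt ⟨h1, h2⟩
      have hcosle1 : Real.cos E ≤ 1 := Real.cos_le_one E
      have hr2 : r < 2 := by linarith
      refine ⟨by simpa [hr] using ne_of_gt h1, ?_, ?_⟩
      · exact hr2
      · -- |E| < arccos (r/2)
        by_contra hcon
        push_neg at hcon
        have harc : Real.arccos (r/2) ≤ Real.pi := Real.arccos_le_pi _
        have h0 : 0 ≤ Real.arccos (r/2) := Real.arccos_nonneg _
        have : Real.cos |E| ≤ Real.cos (Real.arccos (r/2)) := by
          rcases eq_or_lt_of_le hcon with h' | h'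
          · rw [h']
          · exact le_of_lt (Real.cos_lt_cos_of_nonneg_of_le_pi h0 hEabs h')
        rw [Real.cos_arccos (by linarith) (by linarith), Real.cos_abs] at this
        linarith
    · rintro ⟨h1, h2, h3⟩
      have hrpos : 0 < r := by
        rw [hr]; exact norm_pos_iff.mpr (by simpa [ha] using h1)
      have harc : Real.arccos (r/2) ≤ Real.pi := Real.arccos_le_pi _
      have hclt : Real.cos (Real.arccos (r/2)) < Real.cos |E| :=
        Real.cos_lt_cos_of_nonneg_of_le_pi (abs_nonneg E) harc h3
      rw [Real.cos_arccos (by linarith) (by linarith), Real.cos_abs] at hclt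
      exact ⟨hrpos, by linarith⟩
  · rw [key]
    exact habslt
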